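/- Let K be a compact Hausdorff space and (f_n) a sequence of continuous {0,1}-valued functions on K. If (f_n) converges pointwise on a dense subset D ⊆ K and the family {f_n} has no independent subsequence on K, then (f_n) has a subsequence converging pointwise on all of K. -/

import Mathlib

open Filter Topology

namespace NW

/-- initial segment of length `k` of the sequence `M`. -/
def seg (M : ℕ → ℕ) (k : ℕ) : List ℕ := (List.range k).map M

@[simp] lemma seg_length (M : ℕ → ℕ) (k : ℕ) : (seg M k).length = k := by
  simp [seg]

lemma seg_get (M : ℕ → ℕ) (k i : ℕ) (h : i < (seg M k).length) :
    (seg M k).get ⟨i, h⟩ = M i := by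
  simp [seg]

/-- extend the finite list `s` by the sequence `M`. -/
def ext (s : List ℕ) (M : ℕ → ℕ) : ℕ → ℕ :=
  fun i => if h : i < s.length then s.get ⟨i, h⟩ else M (i - s.length)

lemma ext_nil (M : ℕ → ℕ) : ext [] M = M := by
  funext i; simp [ext]

lemma seg_ext_self (s : List ℕ) (M : ℕ → ℕ) : seg (ext s M) s.length = s := by
  apply List.ext_get
  · simp
  · intro i h1 h2
    rw [seg_get]
    simp only [ext]
    rw [dif_pos h2]

lemma ext_concat (s : List ℕ) (a : ℕ) (T U : ℕ → ℕ)
    (h0 : U 0 = a) (hrest : ∀ j, U (j + 1) = T j) :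
    ext (s ++ [a]) T = ext s U := by
  funext i
  simp only [ext]
  rcases lt_trichotomy i s.length with hi | hi | hi
  · have h1 : i < (s ++ [a]).length := by simp; omega
    rw [dif_pos h1, dif_pos hi]
    simp only [List.get_eq_getElem]
    exact List.getElem_append_left hi
  · subst hi
    have h1 : s.length < (s ++ [a]).length := by simp
    rw [dif_pos h1, dif_neg (by omega)]
    simp only [List.get_eq_getElem, Nat.sub_self, h0]
    exact List.getElem_concat_length rfl (by simp)
  · rw [dif_neg (by simp; omega), dif_neg (by omega)]
    rw [show i - s.length = (i - (s.length + 1)) + 1 from by omega, hrest]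
    congr 1
    simp

lemma exists_strictMono_into (S : Set ℕ) (hS : S.Infinite) :
    ∃ σ : ℕ → ℕ, StrictMono σ ∧ ∀ i, σ i ∈ S := by
  have h : ∀ a : ℕ, ∃ b, b ∈ S ∧ a < b := fun a => by
    obtain ⟨b, hb, hab⟩ := hS.exists_gt a; exact ⟨b, hb, hab⟩
  choose next hmem hlt using h
  obtain ⟨a0, ha0⟩ := hS.nonempty
  refine ⟨fun i => Nat.rec a0 (fun _ p => next p) i, strictMono_nat_of_lt_succ ?_, ?_⟩
  · intro n; exact hlt _
  · intro i; induction i with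
    | zero => exact ha0
    | succ k _ => exact hmem _

lemma succ_sm : StrictMono (fun i : ℕ => i + 1) := fun a b h => by dsimp only; omega

variable (F : Set (List ℕ))

def Acc (M : ℕ → ℕ) (s : List ℕ) : Prop :=
  ∀ g : ℕ → ℕ, StrictMono g → ∃ k, seg (ext s (M ∘ g)) k ∈ F

def Rej (M : ℕ → ℕ) (s : List ℕ) : Prop :=
  ∀ N : ℕ → ℕ, StrictMono N → Set.range N ⊆ Set.range M → ¬ Acc F N s

variable {F}

lemma factor {M N : ℕ → ℕ} (hM : StrictMono M) (hN : StrictMono N)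
    (h : Set.range N ⊆ Set.range M) : ∃ w : ℕ → ℕ, StrictMono w ∧ N = M ∘ w := by
  have hw : ∀ n, ∃ m, M m = N n := fun n => h ⟨n, rfl⟩
  choose w hwspec using hw
  refine ⟨w, ?_, ?_⟩
  · intro a b hab
    have : M (w a) < M (w b) := by rw [hwspec, hwspec]; exact hN hab
    exact hM.lt_iff_lt.mp this
  · funext n; simp [Function.comp, hwspec]

lemma Acc.comp {M : ℕ → ℕ} {s : List ℕ} (h : Acc F M s) {g : ℕ → ℕ}
    (hg : StrictMono g) : Acc F (M ∘ g) s := by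
  intro g' hg'
  exact h (g ∘ g') (hg.comp hg')

lemma Acc.subset {M N : ℕ → ℕ} {s : List ℕ} (h : Acc F M s) (hM : StrictMono M)
    (hN : StrictMono N) (hsub : Set.range N ⊆ Set.range M) : Acc F N s := by
  obtain ⟨w, hw, rfl⟩ := factor hM hN hsub
  exact h.comp hw

lemma Rej.subset {M N : ℕ → ℕ} {s : List ℕ} (h : Rej F M s)
    (hsub : Set.range N ⊆ Set.range M) : Rej F N s :=
  fun N' hN' hsub' => h N' hN' (hsub'.trans hsub)

lemma Acc.of_mem {M : ℕ → ℕ} {s : List ℕ} (h : s ∈ F) : Acc F M s :=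
  fun _g _ => ⟨s.length, by rwa [seg_ext_self]⟩

lemma Rej.not_acc {M : ℕ → ℕ} {s : List ℕ} (h : Rej F M s) (hM : StrictMono M) :
    ¬ Acc F M s := h M hM subset_rfl

lemma Rej.not_mem {M : ℕ → ℕ} {s : List ℕ} (h : Rej F M s) (hM : StrictMono M) :
    s ∉ F := fun hs => h.not_acc hM (Acc.of_mem hs)

lemma exists_decide (M : ℕ → ℕ) (hM : StrictMono M) (s : List ℕ) :
    ∃ N : ℕ → ℕ, StrictMono N ∧ Set.range N ⊆ Set.range M ∧ (Acc F N s ∨ Rej F N s) := by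
  by_cases h : Rej F M s
  · exact ⟨M, hM, subset_rfl, Or.inr h⟩
  · simp only [Rej, not_forall, not_not] at h
    obtain ⟨N, hN, hsub, hacc⟩ := h
    exact ⟨N, hN, hsub, Or.inl hacc⟩

/-- Key lemma: if `M` rejects `s`, there is a subsequence `N` of `M` such that for
every `j`, the tail of `N` beyond position `j` rejects `s ++ [N j]`. -/
theorem rej_step {M : ℕ → ℕ} (hM : StrictMono M) {s : List ℕ} (h : Rej F M s) :
    ∃ N : ℕ → ℕ, StrictMono N ∧ Set.range N ⊆ Set.range M ∧
      ∀ j, Rej F (fun i => N (i + j + 1)) (s ++ [N j]) := by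
  classical
  -- step construction
  let step : {T : ℕ → ℕ // StrictMono T} → {T : ℕ → ℕ // StrictMono T} := fun T =>
    ⟨(exists_decide (F := F) (T.1 ∘ (fun i => i + 1)) (T.2.comp succ_sm) (s ++ [T.1 0])).choose,
     (exists_decide (F := F) (T.1 ∘ (fun i => i + 1)) (T.2.comp succ_sm) (s ++ [T.1 0])).choose_spec.1⟩
  let sq : ℕ → {T : ℕ → ℕ // StrictMono T} := fun i => Nat.rec ⟨M, hM⟩ (fun _ T => step T) i
  have hstep : ∀ i, sq (i + 1) = step (sq i) := fun i => rfl
  have hspec : ∀ i, Set.range (sq (i+1)).1 ⊆ Set.range ((sq i).1 ∘ (fun t => t + 1)) ∧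
      (Acc F (sq (i+1)).1 (s ++ [(sq i).1 0]) ∨ Rej F (sq (i+1)).1 (s ++ [(sq i).1 0])) := by
    intro i
    exact ⟨(exists_decide (F := F) ((sq i).1 ∘ (fun t => t + 1)) ((sq i).2.comp succ_sm)
        (s ++ [(sq i).1 0])).choose_spec.2.1,
      (exists_decide (F := F) ((sq i).1 ∘ (fun t => t + 1)) ((sq i).2.comp succ_sm)
        (s ++ [(sq i).1 0])).choose_spec.2.2⟩
  have hsub : ∀ i j, i ≤ j → Set.range (sq j).1 ⊆ Set.range (sq i).1 := by
    intro i j hij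
    induction j with
    | zero => have : i = 0 := by omega
              subst this; exact subset_rfl
    | succ k ih =>
      rcases Nat.lt_or_ge i (k+1) with hlt | hge
      · refine ((hspec k).1.trans ?_).trans (ih (by omega))
        rintro x ⟨t, rfl⟩; exact ⟨t + 1, rfl⟩
      · have : i = k + 1 := by omega
        subst this; exact subset_rfl
  set n : ℕ → ℕ := fun i => (sq i).1 0 with hn
  have hmem_tail : ∀ i j, i < j → n j ∈ Set.range ((sq i).1 ∘ (fun t => t + 1)) := by
    intro i j hij
    have h1 : n j ∈ Set.range (sq j).1 := ⟨0, rfl⟩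
    have h2 : Set.range (sq j).1 ⊆ Set.range (sq (i+1)).1 := hsub (i+1) j hij
    exact (hspec i).1 (h2 h1)
  have hnm : StrictMono n := by
    apply strictMono_nat_of_lt_succ
    intro i
    obtain ⟨t, ht⟩ := hmem_tail i (i+1) (by omega)
    have ht' : (sq i).1 (t+1) = n (i+1) := ht
    have hlt : (sq i).1 0 < (sq i).1 (t+1) := (sq i).2 (by omega)
    show n i < n (i + 1)
    rw [← ht']
    exact hlt
  have hnmem : ∀ i j, i ≤ j → n j ∈ Set.range (sq i).1 := by
    intro i j hij
    exact hsub i j hij ⟨0, rfl⟩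
  -- the set of accepting stages is finite
  have hSfin : {i | Acc F (sq (i+1)).1 (s ++ [n i])}.Finite := by
    by_contra hinf
    obtain ⟨σ, hσ, hσmem⟩ := exists_strictMono_into _ hinf
    have hN'sm : StrictMono (fun j => n (σ j)) := hnm.comp hσ
    refine h (fun j => n (σ j)) hN'sm ?_ ?_
    · rintro x ⟨j, rfl⟩; exact hsub 0 (σ j) (by omega) ⟨0, rfl⟩
    · -- Acc F (fun j => n (σ j)) s
      intro g hg
      set i := σ (g 0) with hi
      have hacc : Acc F (sq (i+1)).1 (s ++ [n i]) := hσmem (g 0)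
      set T : ℕ → ℕ := fun j => n (σ (g (j+1))) with hT
      have hTsm : StrictMono T := hnm.comp (hσ.comp (hg.comp succ_sm))
      have hTsub : Set.range T ⊆ Set.range (sq (i+1)).1 := by
        rintro x ⟨j, rfl⟩
        exact hnmem (i+1) (σ (g (j+1)))
          (by have : σ (g 0) < σ (g (j+1)) := hσ (hg (by omega)); omega)
      obtain ⟨w, hw, hTw⟩ := factor (sq (i+1)).2 hTsm hTsub
      obtain ⟨k, hk⟩ := hacc w hw
      refine ⟨k, ?_⟩
      have heq : ext (s ++ [n i]) ((sq (i+1)).1 ∘ w) = ext s ((fun j => n (σ j)) ∘ g) := by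
        apply ext_concat
        · rfl
        · intro j
          simpa using congrFun hTw j
      rwa [heq] at hk
  -- choose the tail beyond all accepting stages
  obtain ⟨I, hI⟩ : ∃ I, ∀ i, I ≤ i → Rej F (sq (i+1)).1 (s ++ [n i]) := by
    obtain ⟨I, hI⟩ := hSfin.bddAbove
    refine ⟨I + 1, fun i hi => ?_⟩
    rcases (hspec i).2 with hacc | hrej
    · exact absurd (hI hacc) (by omega)
    · exact hrej
  refine ⟨fun j => n (I + j), hnm.comp (fun a b hab => by omega), ?_, ?_⟩
  · rintro x ⟨j, rfl⟩; exact hsub 0 (I + j) (by omega) ⟨0, rfl⟩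
  · intro j
    refine (hI (I + j) (by omega)).subset ?_
    rintro x ⟨t, rfl⟩
    exact hnmem (I + j + 1) (I + (t + j + 1)) (by omega)



variable (F) in
/-- the tail-rejection property. -/
def Q (M : ℕ → ℕ) (s : List ℕ) : Prop :=
  ∀ t, Rej F (fun i => M (i + t + 1)) (s ++ [M t])

lemma Q_subset {M N : ℕ → ℕ} {s : List ℕ} (hM : StrictMono M) (hN : StrictMono N)
    (hsub : Set.range N ⊆ Set.range M) (hQ : Q F M s) : Q F N s := by
  intro t
  obtain ⟨j, hj⟩ : N t ∈ Set.range M := hsub ⟨t, rfl⟩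
  rw [← hj]
  refine (hQ j).subset ?_
  rintro x ⟨i, rfl⟩
  have h1 : N (i + t + 1) ∈ Set.range M := hsub ⟨i + t + 1, rfl⟩
  obtain ⟨u, hu⟩ := h1
  have h2 : M j < M u := by
    rw [hj, hu]; exact hN (by omega)
  have h3 : j < u := hM.lt_iff_lt.mp h2
  refine ⟨u - j - 1, ?_⟩
  show M (u - j - 1 + j + 1) = N (i + t + 1)
  rw [show u - j - 1 + j + 1 = u from by omega]
  exact hu

lemma fold_rej {M : ℕ → ℕ} (hM : StrictMono M) (L : List (List ℕ))
    (hL : ∀ s ∈ L, Rej F M s) :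
    ∃ N : ℕ → ℕ, StrictMono N ∧ Set.range N ⊆ Set.range M ∧ ∀ s ∈ L, Q F N s := by
  induction L with
  | nil => exact ⟨M, hM, subset_rfl, by simp⟩
  | cons s L' ih =>
    obtain ⟨M₁, hM₁, hsub₁, hQ₁⟩ := ih (fun s' hs' => hL s' (by simp [hs']))
    have hrej : Rej F M₁ s := (hL s (by simp)).subset hsub₁
    obtain ⟨N, hN, hsub₂, hQN⟩ := rej_step hM₁ hrej
    refine ⟨N, hN, hsub₂.trans hsub₁, ?_⟩
    intro s' hs'
    rcases List.mem_cons.mp hs' with rfl | hs'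
    · exact hQN
    · exact Q_subset hM₁ hN hsub₂ (hQ₁ s' hs')

variable (F) in
/-- state for the main construction -/
def Inv (p : (ℕ → ℕ) × List ℕ) : Prop :=
  StrictMono p.1 ∧ p.2.Chain' (· < ·) ∧ (∀ a ∈ p.2, a < p.1 0) ∧
    ∀ s, s.Sublist p.2 → Rej F p.1 s

lemma step_main {p : (ℕ → ℕ) × List ℕ} (hp : Inv F p) :
    ∃ q : (ℕ → ℕ) × List ℕ, Inv F q ∧ (∃ a, q.2 = p.2 ++ [a] ∧ a ∈ Set.range p.1) ∧
      Set.range q.1 ⊆ Set.range p.1 := by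
  obtain ⟨hM, hc, hlt, hrej⟩ := hp
  obtain ⟨N, hN, hsub, hQ⟩ := fold_rej hM p.2.sublists
    (fun s hs => hrej s (List.mem_sublists.mp hs))
  refine ⟨(fun i => N (i + 1), p.2 ++ [N 0]), ⟨hN.comp succ_sm, ?_, ?_, ?_⟩,
    ⟨N 0, rfl, hsub ⟨0, rfl⟩⟩, fun x ⟨i, hi⟩ => hsub ⟨i + 1, hi⟩⟩
  · -- chain'
    simp only [List.Chain', List.isChain_append]
    refine ⟨hc, List.isChain_singleton _, ?_⟩
    intro x hx y hy
    simp only [List.head?_cons, Option.mem_def, Option.some.injEq] at hy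
    subst hy
    have hxm : x ∈ p.2 := by
      obtain ⟨h', h''⟩ := List.mem_getLast?_eq_getLast hx
      exact h'' ▸ List.getLast_mem h'
    have h1 : x < p.1 0 := hlt x hxm
    obtain ⟨u, hu⟩ := hsub (⟨0, rfl⟩ : N 0 ∈ Set.range N)
    have : p.1 0 ≤ p.1 u := hM.monotone (by omega)
    omega
  · -- bound
    intro a ha
    rcases List.mem_append.mp ha with ha | ha
    · have h1 : a < p.1 0 := hlt a ha
      obtain ⟨u, hu⟩ := hsub (⟨0, rfl⟩ : N 0 ∈ Set.range N)
      have h2 : p.1 0 ≤ p.1 u := hM.monotone (by omega)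
      have h3 : N 0 < N 1 := hN (by omega)
      show a < N 1
      omega
    · simp only [List.mem_singleton] at ha
      subst ha
      exact hN (by omega)
  · -- rejection of sublists
    intro s hs
    rw [List.sublist_append_iff] at hs
    obtain ⟨x, y, rfl, hx, hy⟩ := hs
    rcases List.sublist_singleton.mp hy with rfl | rfl
    · -- old sublist: rejection persists
      rw [List.append_nil]
      refine (hrej x hx).subset ?_
      rintro z ⟨i, rfl⟩
      exact hsub ⟨i + 1, rfl⟩
    · -- new sublist ending with N 0
      exact hQ x (List.mem_sublists.mpr hx) 0

lemma range_map_sublist {g : ℕ → ℕ} (hg : StrictMono g) (k : ℕ) :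
    ∀ k', (∀ i < k, g i < k') → ((List.range k).map g).Sublist (List.range k') := by
  induction k with
  | zero => simp
  | succ m ih =>
    intro k' h
    rw [List.range_succ, List.map_append]
    have h1 : ((List.range m).map g).Sublist (List.range (g m)) :=
      ih (g m) (fun i hi => hg hi)
    have h2 : (((List.range m).map g) ++ [g m]).Sublist (List.range (g m) ++ [g m]) :=
      List.Sublist.append h1 (List.Sublist.refl _)
    simp only [List.map_cons, List.map_nil]
    refine h2.trans ?_
    rw [← List.range_succ]
    exact List.range_sublist.mpr (h m (by omega))

/-- The Nash-Williams / Galvin-Prikry theorem, open case. -/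
theorem nashWilliams (F : Set (List ℕ)) :
    ∃ h : ℕ → ℕ, StrictMono h ∧
      ((∀ g, StrictMono g → ∃ k, seg (h ∘ g) k ∈ F) ∨
       (∀ g, StrictMono g → ∀ k, seg (h ∘ g) k ∉ F)) := by
  classical
  obtain ⟨N₁, hN₁, -, hdec⟩ := exists_decide (F := F) id strictMono_id []
  rcases hdec with hacc | hrej
  · refine ⟨N₁, hN₁, Or.inl ?_⟩
    intro g hg
    obtain ⟨k, hk⟩ := hacc g hg
    rw [ext_nil] at hk
    exact ⟨k, hk⟩
  · -- build the sequence of states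
    have hinv0 : Inv F (N₁, ([] : List ℕ)) := by
      refine ⟨hN₁, List.isChain_nil, by simp, ?_⟩
      intro s hs
      rw [List.sublist_nil.mp hs]
      exact hrej
    have hnext : ∀ st : {p : (ℕ → ℕ) × List ℕ // Inv F p},
        ∃ st' : {p : (ℕ → ℕ) × List ℕ // Inv F p},
          (∃ a, st'.1.2 = st.1.2 ++ [a] ∧ a ∈ Set.range st.1.1) ∧
            Set.range st'.1.1 ⊆ Set.range st.1.1 := by
      intro st
      obtain ⟨q, hq, h1, h2⟩ := step_main st.2
      exact ⟨⟨q, hq⟩, h1, h2⟩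
    choose next hnext1 hnext2 using hnext
    set G : ℕ → {p : (ℕ → ℕ) × List ℕ // Inv F p} :=
      fun k => next^[k] ⟨(N₁, []), hinv0⟩ with hGdef
    have hG : ∀ k, G (k + 1) = next (G k) := fun k =>
      Function.iterate_succ_apply' next k _
    set E : ℕ → ℕ := fun k => ((G (k + 1)).1.2).getLastD 0 with hEdef
    have hGa : ∀ k, (G (k + 1)).1.2 = (G k).1.2 ++ [E k] ∧ E k ∈ Set.range (G k).1.1 := by
      intro k
      obtain ⟨a, ha, hmem⟩ := hnext1 (G k)
      have h1 : (G (k + 1)).1.2 = (G k).1.2 ++ [a] := by rw [hG k]; exact ha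
      have h2 : E k = a := by rw [hEdef]; simp only; rw [h1]; exact List.getLastD_concat
      rw [h2, h1]
      exact ⟨rfl, hmem⟩
    have hc : ∀ k, (G k).1.2 = (List.range k).map E := by
      intro k
      induction k with
      | zero => rfl
      | succ m ih =>
        rw [(hGa m).1, ih, List.range_succ, List.map_append]
        rfl
    have hEsm : StrictMono E := by
      apply strictMono_nat_of_lt_succ
      intro k
      have h1 : E k ∈ (G (k + 1)).1.2 := by rw [(hGa k).1]; simp
      have h2 : E k < (G (k + 1)).1.1 0 := (G (k + 1)).2.2.2.1 _ h1
      obtain ⟨u, hu⟩ := (hGa (k + 1)).2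
      have h3 : (G (k + 1)).1.1 0 ≤ (G (k + 1)).1.1 u := (G (k + 1)).2.1.monotone (by omega)
      omega
    refine ⟨E, hEsm, Or.inr ?_⟩
    intro g hg k
    have hseg : seg (E ∘ g) k = ((List.range k).map g).map E := by
      rw [List.map_map]; rfl
    have hs : (seg (E ∘ g) k).Sublist ((G (g k + 1)).1.2) := by
      rw [hseg, hc (g k + 1)]
      exact List.Sublist.map E (range_map_sublist hg k (g k + 1)
        (fun i hi => by have := hg.monotone (le_of_lt hi); omega))
    exact ((G (g k + 1)).2.2.2.2 _ hs).not_mem (G (g k + 1)).2.1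

/-- blocks of positions used to encode an arbitrary 0-1 pattern into an alternating one -/
def blocks (E : Finset ℕ) : List ℕ → List ℕ
  | [] => []
  | m :: t => (if m ∈ E then [3*m+1, 3*m+2] else [3*m, 3*m+1]) ++ blocks E t

lemma blocks_length (E : Finset ℕ) (t : List ℕ) : (blocks E t).length = 2 * t.length := by
  induction t with
  | nil => rfl
  | cons m t ih =>
    by_cases hm : m ∈ E <;> simp [blocks, hm, ih] <;> omega

lemma blocks_spec (E : Finset ℕ) : ∀ t : List ℕ, t.Pairwise (· < ·) →
    (blocks E t).Chain' (· < ·) ∧ ∀ a ∈ blocks E t, ∃ m ∈ t, 3*m ≤ a ∧ a ≤ 3*m+2 := by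
  intro t
  induction t with
  | nil => simp [blocks, List.Chain', List.isChain_nil]
  | cons m t ih =>
    intro hp
    rw [List.pairwise_cons] at hp
    obtain ⟨hm, hp⟩ := hp
    obtain ⟨ih1, ih2⟩ := ih hp
    have hBmem : ∀ a ∈ (if m ∈ E then [3*m+1, 3*m+2] else [3*m, 3*m+1]), 3*m ≤ a ∧ a ≤ 3*m+2 := by
      by_cases hmE : m ∈ E <;> simp [hmE] <;> try omega
    constructor
    · show ((if m ∈ E then [3*m+1, 3*m+2] else [3*m, 3*m+1]) ++ blocks E t).Chain' (· < ·)
      simp only [List.Chain', List.isChain_append]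
      refine ⟨by by_cases hmE : m ∈ E <;> simp [hmE], ih1, ?_⟩
      intro x hx y hy
      have hxm : x ∈ (if m ∈ E then [3*m+1, 3*m+2] else [3*m, 3*m+1]) := by
        obtain ⟨h', h''⟩ := List.mem_getLast?_eq_getLast hx
        exact h'' ▸ List.getLast_mem h'
      have hym : y ∈ blocks E t := by
        have := List.mem_of_mem_head? hy
        exact this
      obtain ⟨hx1, hx2⟩ := hBmem x hxm
      obtain ⟨m', hm't, hy1, hy2⟩ := ih2 y hym
      have : m < m' := hm m' hm't
      omega
    · intro a ha
      rcases List.mem_append.mp ha with ha | ha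
      · exact ⟨m, by simp, hBmem a ha⟩
      · obtain ⟨m', hm', h1, h2⟩ := ih2 a ha
        exact ⟨m', by simp [hm'], h1, h2⟩

lemma exists_sm_extension (P : List ℕ) (hP : P.Chain' (· < ·)) :
    ∃ g : ℕ → ℕ, StrictMono g ∧ ∀ i (h : i < P.length), g i = P.get ⟨i, h⟩ := by
  classical
  set B := P.foldr max 0 with hB
  have hle : ∀ a ∈ P, a ≤ B := by
    rw [hB]
    clear hB hP
    induction P with
    | nil => simp
    | cons b P ih =>
      intro a ha
      rcases List.mem_cons.mp ha with rfl | ha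
      · simp only [List.foldr_cons]
        exact le_max_left _ _
      · simp only [List.foldr_cons]
        exact le_max_of_le_right (ih a ha)
  refine ⟨fun i => if h : i < P.length then P.get ⟨i, h⟩ else B + 1 + (i - P.length),
    strictMono_nat_of_lt_succ ?_, ?_⟩
  · intro i
    by_cases h1 : i + 1 < P.length
    · rw [dif_pos h1, dif_pos (by omega)]
      exact List.isChain_iff_getElem.mp hP i (by omega)
    · by_cases h2 : i < P.length
      · rw [dif_pos h2, dif_neg h1]
        have := hle _ (P.get_mem ⟨i, h2⟩)
        omega
      · rw [dif_neg h2, dif_neg h1]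
        omega
  · intro i h
    exact dif_pos h

end NW

open NW

theorem stmt13 {K : Type*} [TopologicalSpace K] [CompactSpace K] [T2Space K]
    (f : ℕ → K → ℝ) (hc : ∀ n, Continuous (f n)) (hf : ∀ n x, f n x = 0 ∨ f n x = 1)
    (D : Set K) (hD : Dense D)
    (hconv : ∀ x ∈ D, ∃ L : ℝ, Tendsto (fun n => f n x) atTop (𝓝 L))
    (hind : ¬ ∃ φ : ℕ → ℕ, StrictMono φ ∧ ∀ E F : Finset ℕ, Disjoint E F →
      ∃ x : K, (∀ m ∈ E, f (φ m) x = 1) ∧ (∀ m ∈ F, f (φ m) x = 0)) :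
    ∃ φ : ℕ → ℕ, StrictMono φ ∧ ∀ x : K, ∃ L : ℝ,
      Tendsto (fun m => f (φ m) x) atTop (𝓝 L) := by
  classical
  by_contra hgoal
  push_neg at hgoal
  -- the family of "bad" finite lists: even length, no point realizing the alternating pattern
  set F₀ : Set (List ℕ) := {l | l.length % 2 = 0 ∧
    ¬ ∃ x : K, ∀ i (hi : i < l.length), f (l.get ⟨i, hi⟩) x = if i % 2 = 0 then 1 else 0}
    with hF₀
  obtain ⟨h, hsm, hNW⟩ := nashWilliams F₀
  rcases hNW with hleft | hright
  · -- h has a divergence point; build an alternating subsequence, contradiction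
    obtain ⟨x, hx⟩ := hgoal h hsm
    set T₁ : Set ℕ := {m | f (h m) x = 1} with hT₁def
    set T₀ : Set ℕ := {m | f (h m) x = 0} with hT₀def
    have hT₁ : T₁.Infinite := by
      by_contra hfin
      rw [Set.not_infinite] at hfin
      obtain ⟨N, hN⟩ := hfin.bddAbove
      have hev : ∀ᶠ m in atTop, f (h m) x = 0 := by
        rw [eventually_atTop]
        refine ⟨N + 1, fun m hm => ?_⟩
        refine (hf (h m) x).resolve_right (fun h1 => ?_)
        have := hN h1
        omega
      exact hx 0 (Tendsto.congr' (hev.mono fun m hm => hm.symm) tendsto_const_nhds)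
    have hT₀ : T₀.Infinite := by
      by_contra hfin
      rw [Set.not_infinite] at hfin
      obtain ⟨N, hN⟩ := hfin.bddAbove
      have hev : ∀ᶠ m in atTop, f (h m) x = 1 := by
        rw [eventually_atTop]
        refine ⟨N + 1, fun m hm => ?_⟩
        refine (hf (h m) x).resolve_left (fun h1 => ?_)
        have := hN h1
        omega
      exact hx 1 (Tendsto.congr' (hev.mono fun m hm => hm.symm) tendsto_const_nhds)
    have hpick : ∀ (i a : ℕ), ∃ m, a < m ∧ f (h m) x = if i % 2 = 0 then 1 else 0 := by
      intro i a
      by_cases hi : i % 2 = 0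
      · obtain ⟨b, hb, hab⟩ := hT₁.exists_gt a
        exact ⟨b, hab, by simp [hi]; exact hb⟩
      · obtain ⟨b, hb, hab⟩ := hT₀.exists_gt a
        exact ⟨b, hab, by simp [hi]; exact hb⟩
    choose nx hnx1 hnx2 using hpick
    set g : ℕ → ℕ := fun i => Nat.rec (nx 0 0) (fun i p => nx (i+1) p) i with hgdef
    have hgsm : StrictMono g := strictMono_nat_of_lt_succ (fun i => hnx1 (i+1) (g i))
    have hgval : ∀ i, f (h (g i)) x = if i % 2 = 0 then 1 else 0 := by
      intro i
      cases i with
      | zero => exact hnx2 0 0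
      | succ k => exact hnx2 (k+1) (g k)
    obtain ⟨k, hk⟩ := hleft g hgsm
    rw [hF₀] at hk
    refine hk.2 ⟨x, ?_⟩
    intro i hi
    rw [seg_get]
    exact hgval i
  · -- no alternating pattern fails: build an independent subsequence
    refine hind ⟨fun m => h (3*m+1), hsm.comp (fun a b hab => by omega), ?_⟩
    intro E F hEF
    set t : List ℕ := (E ∪ F).sort (· ≤ ·) with ht
    have htp : t.Pairwise (· < ·) := (Finset.sortedLT_sort _).pairwise
    obtain ⟨hPchain, hPmem⟩ := blocks_spec E t htp
    set P : List ℕ := blocks E t with hPdef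
    obtain ⟨g, hgsm, hgval⟩ := exists_sm_extension P hPchain
    have hlen : (seg (h ∘ g) P.length).length = P.length := seg_length _ _
    have hl : seg (h ∘ g) P.length = P.map h := by
      apply List.ext_get
      · simp
      · intro i h1 h2
        rw [seg_get]
        show h (g i) = (P.map h).get ⟨i, h2⟩
        rw [hgval i (by simpa using h2)]
        simp
    have hnmem := hright g hgsm P.length
    rw [hF₀] at hnmem
    simp only [Set.mem_setOf_eq, not_and, not_not] at hnmem
    have hpar : (seg (h ∘ g) P.length).length % 2 = 0 := by
      rw [hlen, hPdef, blocks_length]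
      omega
    obtain ⟨x, hxpat⟩ := hnmem hpar
    rw [hl] at hxpat
    -- extract the values from the pattern
    have extract : ∀ (t' : List ℕ),
        (∀ i (hi : i < ((blocks E t').map h).length),
          f (((blocks E t').map h).get ⟨i, hi⟩) x = if i % 2 = 0 then 1 else 0) →
        ∀ m ∈ t', f (h (3*m+1)) x = if m ∈ E then 1 else 0 := by
      intro t'
      induction t' with
      | nil => intro _ m hm; exact absurd hm List.not_mem_nil
      | cons m t' ih =>
        intro hpat m' hm'
        by_cases hmE : m ∈ E
        · have hsimp : (blocks E (m :: t')).map h =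
              h (3*m+1) :: h (3*m+2) :: (blocks E t').map h := by
            simp [blocks, hmE]
          rw [hsimp] at hpat
          rcases List.mem_cons.mp hm' with rfl | hm'
          · have := hpat 0 (by simp)
            simpa [hmE] using this
          · refine ih ?_ m' hm'
            intro i hi
            have := hpat (i+2) (by simp at hi ⊢; omega)
            have hmod : (i+2) % 2 = i % 2 := by omega
            rw [hmod] at this
            exact this
        · have hsimp : (blocks E (m :: t')).map h =
              h (3*m) :: h (3*m+1) :: (blocks E t').map h := by
            simp [blocks, hmE]
          rw [hsimp] at hpat
          rcases List.mem_cons.mp hm' with rfl | hm'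
          · have := hpat 1 (by simp)
            simpa [hmE] using this
          · refine ih ?_ m' hm'
            intro i hi
            have := hpat (i+2) (by simp at hi ⊢; omega)
            have hmod : (i+2) % 2 = i % 2 := by omega
            rw [hmod] at this
            exact this
    have hvals := extract t hxpat
    refine ⟨x, fun m hm => ?_, fun m hm => ?_⟩
    · have hmt : m ∈ t := by
        rw [ht, Finset.mem_sort]
        exact Finset.mem_union_left _ hm
      have := hvals m hmt
      simpa [hm] using this
    · have hmt : m ∈ t := by
        rw [ht, Finset.mem_sort]
        exact Finset.mem_union_right _ hm
      have hmE : m ∉ E := fun hmE => (Finset.disjoint_left.mp hEF) hmE hm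
      have := hvals m hmt
      simpa [hmE] using this
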